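/- Let d ≥ 1, σ ≥ 2, c ≠ 0, and let f : ℝ^d → ℝ be three times continuously differentiable with gradient ∇f. Fix t > 0 and suppose q, p : I → ℝ^d is a sufficiently smooth (C³) solution, on an open interval I containing t, of the reduced Hamiltonian system (d/ds)qᵃ(s) = −pₐ(s)/(c s^{2σ+1}), (d/ds)pₐ(s) = σ² c s^{3σ−1} (∂f/∂qᵃ)(q(s)). For τ > 0 define the one-step Strang-splitting update (q″(τ), p″(τ)) by: q₁ = q(t) + (1/(2σc)) [(t+τ/2)^{−2σ} − t^{−2σ}] · p(t); p″ = p(t) + (σc/3) [(t+τ)^{3σ} − t^{3σ}] · ∇f(q₁); q″ = q₁ + (1/(2σc)) [(t+τ)^{−2σ} − (t+τ/2)^{−2σ}] · p″. Then the local error satisfies ‖(q(t+τ), p(t+τ)) − (q″(τ), p″(τ))‖ = O(τ³) as τ → 0⁺. -/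

import Mathlib

/-- Intermediate position of the Strang-splitting step (exact flow of `H_K^Z`
over the half step): `q₁ = q(t) + (1/(2σc)) [(t+τ/2)^(-2σ) - t^(-2σ)] p(t)`. -/
noncomputable def si2Q1 (d : ℕ) (σ c t : ℝ) (q p : ℝ → Fin d → ℝ) (τ : ℝ) :
    Fin d → ℝ :=
  fun a => q t a
    + 1 / (2 * σ * c) * ((t + τ / 2) ^ (-(2 * σ)) - t ^ (-(2 * σ))) * p t a

/-- Momentum update of the Strang-splitting step (exact flow of `H_V^Z` over the
full step, evaluated at `q₁`):
`p″ = p(t) + (σc/3) [(t+τ)^(3σ) - t^(3σ)] ∇f(q₁)`. -/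
noncomputable def si2P (d : ℕ) (σ c t : ℝ) (f : (Fin d → ℝ) → ℝ)
    (q p : ℝ → Fin d → ℝ) (τ : ℝ) : Fin d → ℝ :=
  fun a => p t a
    + σ * c / 3 * ((t + τ) ^ (3 * σ) - t ^ (3 * σ)) *
      deriv (fun s : ℝ => f (Function.update (si2Q1 d σ c t q p τ) a s))
        (si2Q1 d σ c t q p τ a)

/-- Final position of the Strang-splitting step (exact flow of `H_K^Z` over the
second half step): `q″ = q₁ + (1/(2σc)) [(t+τ)^(-2σ) - (t+τ/2)^(-2σ)] p″`. -/
noncomputable def si2Q (d : ℕ) (σ c t : ℝ) (f : (Fin d → ℝ) → ℝ)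
    (q p : ℝ → Fin d → ℝ) (τ : ℝ) : Fin d → ℝ :=
  fun a => si2Q1 d σ c t q p τ a
    + 1 / (2 * σ * c) * ((t + τ) ^ (-(2 * σ)) - (t + τ / 2) ^ (-(2 * σ))) *
      si2P d σ c t f q p τ a



open Asymptotics Filter Set

lemma isBigO_id_of_zero {E : Type*} [NormedAddCommGroup E] [NormedSpace ℝ E]
    {φ : ℝ → E} (h : DifferentiableAt ℝ φ 0) (h0 : φ 0 = 0) :
    φ =O[nhds 0] fun τ : ℝ => τ := by
  simpa [h0] using h.isBigO_sub

lemma bound_step {E : Type*} [NormedAddCommGroup E] [NormedSpace ℝ E]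
    {φ φ' : ℝ → E} {δ C : ℝ} {n : ℕ} (hC : 0 ≤ C)
    (hd : ∀ s ∈ Set.Icc (0:ℝ) δ, HasDerivAt φ (φ' s) s)
    (h0 : φ 0 = 0)
    (hb : ∀ s ∈ Set.Icc (0:ℝ) δ, ‖φ' s‖ ≤ C * s ^ n) :
    ∀ s ∈ Set.Icc (0:ℝ) δ, ‖φ s‖ ≤ C * s ^ (n + 1) := by
  intro s hs
  have hsub : Set.Icc (0:ℝ) s ⊆ Set.Icc 0 δ := Set.Icc_subset_Icc le_rfl hs.2
  have key := (convex_Icc (0:ℝ) s).norm_image_sub_le_of_norm_hasDerivWithin_le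
    (f := φ) (f' := φ') (C := C * s ^ n)
    (fun x hx => ((hd x (hsub hx)).hasDerivWithinAt))
    (fun x hx => le_trans (hb x (hsub hx))
      (mul_le_mul_of_nonneg_left (pow_le_pow_left₀ hx.1 hx.2 n) hC))
    ⟨le_rfl, hs.1⟩ ⟨hs.1, le_rfl⟩
  rw [h0, sub_zero, sub_zero] at key
  calc ‖φ s‖ ≤ C * s ^ n * ‖s‖ := key
    _ = C * s ^ (n + 1) := by
        rw [Real.norm_eq_abs, abs_of_nonneg hs.1]; ring

lemma isBigO_of_chain {E : Type*} [NormedAddCommGroup E] [NormedSpace ℝ E]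
    {φ φ1 : ℝ → E} {n : ℕ}
    (hd : ∀ᶠ s in nhds (0:ℝ), HasDerivAt φ (φ1 s) s)
    (h0 : φ 0 = 0) (h10 : φ1 0 = 0)
    (h1 : φ1 =O[nhdsWithin 0 (Set.Ioi 0)] fun τ : ℝ => τ ^ n) :
    φ =O[nhdsWithin 0 (Set.Ioi 0)] fun τ : ℝ => τ ^ (n + 1) := by
  rw [isBigO_iff] at h1
  obtain ⟨C, hC⟩ := h1
  rw [eventually_nhdsWithin_iff] at hC
  obtain ⟨δ1, hδ1, h1'⟩ := Metric.eventually_nhds_iff.mp hC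
  obtain ⟨δ2, hδ2, h2'⟩ := Metric.eventually_nhds_iff.mp hd
  set δ := min δ1 δ2 / 2 with hδdef
  have hδpos : 0 < δ := by positivity
  set C' := max C 0 with hC'
  have hbd : ∀ s ∈ Set.Icc (0:ℝ) δ, HasDerivAt φ (φ1 s) s := by
    intro s hs
    apply h2'
    rw [Real.dist_eq, sub_zero, abs_of_nonneg hs.1]
    calc s ≤ δ := hs.2
      _ < δ2 := by rw [hδdef]; have := min_le_right δ1 δ2; linarith
  have hbb : ∀ s ∈ Set.Ioc (0:ℝ) δ, ‖φ1 s‖ ≤ C' * s ^ n := by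
    intro s hs
    have hda : dist s 0 < δ1 := by
      rw [Real.dist_eq, sub_zero, abs_of_nonneg hs.1.le]
      calc s ≤ δ := hs.2
        _ < δ1 := by rw [hδdef]; have := min_le_left δ1 δ2; linarith
    have := h1' hda hs.1
    calc ‖φ1 s‖ ≤ C * ‖s ^ n‖ := this
      _ ≤ C' * s ^ n := by
          rw [Real.norm_eq_abs, abs_of_nonneg (pow_nonneg hs.1.le n)]
          exact mul_le_mul_of_nonneg_right (le_max_left _ _)
            (pow_nonneg hs.1.le n)
  rw [isBigO_iff]
  refine ⟨C', ?_⟩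
  filter_upwards [Ioo_mem_nhdsGT_of_mem (⟨le_rfl, hδpos⟩ : (0:ℝ) ∈ Set.Ico 0 δ)]
    with τ hτ
  -- on [0, τ] we have the bound ‖φ1 s‖ ≤ C' * τ ^ n... do bound_step on Icc 0 τ
  have hsub : Set.Icc (0:ℝ) τ ⊆ Set.Icc 0 δ := Set.Icc_subset_Icc le_rfl hτ.2.le
  have hbb' : ∀ s ∈ Set.Icc (0:ℝ) τ, ‖φ1 s‖ ≤ C' * s ^ n := by
    intro s hs
    rcases eq_or_lt_of_le hs.1 with h | h
    · rw [← h, h10, norm_zero]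
      positivity
    · exact hbb s ⟨h, (hsub hs).2⟩
  have := bound_step (le_max_right C 0) (fun s hs => hbd s (hsub hs)) h0 hbb'
  have hb := this τ ⟨hτ.1.le, le_rfl⟩
  rw [Real.norm_eq_abs (τ ^ (n+1)), abs_of_nonneg (pow_nonneg hτ.1.le _)]
  exact hb

lemma isBigO_sq {E : Type*} [NormedAddCommGroup E] [NormedSpace ℝ E]
    {φ φ1 : ℝ → E}
    (hd : ∀ᶠ s in nhds (0:ℝ), HasDerivAt φ (φ1 s) s)
    (hd1 : DifferentiableAt ℝ φ1 0)
    (h0 : φ 0 = 0) (h10 : φ1 0 = 0) :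
    φ =O[nhdsWithin 0 (Set.Ioi 0)] fun τ : ℝ => τ ^ 2 := by
  have h1 : φ1 =O[nhdsWithin 0 (Set.Ioi 0)] fun τ : ℝ => τ ^ 1 := by
    refine ((isBigO_id_of_zero hd1 h10).mono nhdsWithin_le_nhds).congr_right ?_
    intro τ; simp
  exact isBigO_of_chain hd h0 h10 h1

lemma isBigO_cube {E : Type*} [NormedAddCommGroup E] [NormedSpace ℝ E]
    {φ φ1 φ2 : ℝ → E}
    (hd : ∀ᶠ s in nhds (0:ℝ), HasDerivAt φ (φ1 s) s)
    (hd1 : ∀ᶠ s in nhds (0:ℝ), HasDerivAt φ1 (φ2 s) s)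
    (hd2 : DifferentiableAt ℝ φ2 0)
    (h0 : φ 0 = 0) (h10 : φ1 0 = 0) (h20 : φ2 0 = 0) :
    φ =O[nhdsWithin 0 (Set.Ioi 0)] fun τ : ℝ => τ ^ 3 := by
  have h1 : φ1 =O[nhdsWithin 0 (Set.Ioi 0)] fun τ : ℝ => τ ^ 2 :=
    isBigO_sq hd1 hd2 h10 h20
  exact isBigO_of_chain hd h0 h10 h1

lemma deriv_update_eq {d : ℕ} {f : (Fin d → ℝ) → ℝ} {x : Fin d → ℝ}
    (hf : DifferentiableAt ℝ f x) (a : Fin d) :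
    deriv (fun r : ℝ => f (Function.update x a r)) (x a)
      = fderiv ℝ f x (Pi.single a 1) := by
  have hcurve : ∀ r : ℝ,
      Function.update x a r = x + (r - x a) • (Pi.single a 1 : Fin d → ℝ) := by
    intro r; funext b
    rcases eq_or_ne b a with h | h
    · subst h; simp
    · simp [Function.update_apply, Pi.single_apply, h]
  have hline : HasDerivAt
      (fun r : ℝ => x + (r - x a) • (Pi.single a 1 : Fin d → ℝ))
      (Pi.single a 1) (x a) := by
    simpa using (((hasDerivAt_id (x a)).sub_const (x a)).smul_const
      (Pi.single a 1 : Fin d → ℝ)).const_add x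
  have hx0 : x + ((x a : ℝ) - x a) • (Pi.single a 1 : Fin d → ℝ) = x := by simp
  have hF : HasFDerivAt f (fderiv ℝ f x)
      (x + ((x a : ℝ) - x a) • (Pi.single a 1 : Fin d → ℝ)) := by
    rw [hx0]; exact hf.hasFDerivAt
  have hcomp := hF.comp_hasDerivAt (x a) hline
  have hfin : HasDerivAt (fun r : ℝ => f (Function.update x a r))
      (fderiv ℝ f x (Pi.single a 1)) (x a) := by
    refine hcomp.congr_of_eventuallyEq (Filter.Eventually.of_forall fun r => ?_)
    simp [Function.comp, hcurve r]
  exact hfin.deriv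

section scalars
variable (σ c t : ℝ)

/-- `(1/(2σc)) ((t+τ/2)^(-2σ) - t^(-2σ))` -/
noncomputable def sA1 (τ : ℝ) : ℝ := 1/(2*σ*c) * ((t+τ/2)^(-(2*σ)) - t^(-(2*σ)))
noncomputable def sA1' (τ : ℝ) : ℝ := 1/(2*σ*c) * (-(2*σ) * (t+τ/2)^(-(2*σ)-1) * (1/2))
noncomputable def sA1'' (τ : ℝ) : ℝ :=
  (1/(2*σ*c) * -(2*σ) * (1/2)) * ((-(2*σ)-1) * (t+τ/2)^(-(2*σ)-1-1) * (1/2))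
noncomputable def sA2 (τ : ℝ) : ℝ := 1/(2*σ*c) * ((t+τ)^(-(2*σ)) - (t+τ/2)^(-(2*σ)))
noncomputable def sA2' (τ : ℝ) : ℝ :=
  1/(2*σ*c) * (-(2*σ) * (t+τ)^(-(2*σ)-1) - -(2*σ) * (t+τ/2)^(-(2*σ)-1) * (1/2))
noncomputable def sA2'' (τ : ℝ) : ℝ :=
  (1/(2*σ*c) * -(2*σ)) * ((-(2*σ)-1) * (t+τ)^(-(2*σ)-1-1))
    - (1/(2*σ*c) * -(2*σ) * (1/2)) * ((-(2*σ)-1) * (t+τ/2)^(-(2*σ)-1-1) * (1/2))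
noncomputable def sB (τ : ℝ) : ℝ := σ*c/3 * ((t+τ)^(3*σ) - t^(3*σ))
noncomputable def sB' (τ : ℝ) : ℝ := σ*c/3 * (3*σ * (t+τ)^(3*σ-1))
noncomputable def sB'' (τ : ℝ) : ℝ := (σ*c/3 * (3*σ)) * ((3*σ-1) * (t+τ)^(3*σ-1-1))
noncomputable def sU (τ : ℝ) : ℝ := -(c * (t+τ)^(2*σ+1))⁻¹
noncomputable def sU' (τ : ℝ) : ℝ :=
  -(-(c * ((2*σ+1) * (t+τ)^(2*σ+1-1))) / (c * (t+τ)^(2*σ+1))^2)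

variable {σ c t : ℝ}

lemma powD {y τ : ℝ} (h : 0 < t + τ) :
    HasDerivAt (fun s : ℝ => (t + s) ^ y) (y * (t + τ) ^ (y - 1)) τ := by
  have h1 : HasDerivAt (fun s : ℝ => t + s) 1 τ := (hasDerivAt_id τ).const_add t
  have h2 := Real.hasDerivAt_rpow_const (x := t + τ) (p := y) (Or.inl h.ne')
  have h3 := h2.comp τ h1
  rw [mul_one] at h3
  exact h3

lemma powD2 {y τ : ℝ} (h : 0 < t + τ / 2) :
    HasDerivAt (fun s : ℝ => (t + s / 2) ^ y) (y * (t + τ / 2) ^ (y - 1) * (1/2)) τ := by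
  have h1 : HasDerivAt (fun s : ℝ => t + s / 2) (1/2) τ := by
    simpa using ((hasDerivAt_id τ).div_const 2).const_add t
  have h2 := Real.hasDerivAt_rpow_const (x := t + τ / 2) (p := y) (Or.inl h.ne')
  exact h2.comp τ h1

lemma sA1_deriv {τ : ℝ} (h : 0 < t + τ / 2) :
    HasDerivAt (sA1 σ c t) (sA1' σ c t τ) τ :=
  ((powD2 h).sub_const _).const_mul _

lemma sA1'_deriv {τ : ℝ} (h : 0 < t + τ / 2) :
    HasDerivAt (sA1' σ c t) (sA1'' σ c t τ) τ := by
  have h2 := (powD2 (y := -(2*σ)-1) h).const_mul (1/(2*σ*c) * -(2*σ) * (1/2))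
  have he : sA1' σ c t =ᶠ[nhds τ]
      (fun s => 1/(2*σ*c) * -(2*σ) * (1/2) * (t + s/2)^(-(2*σ)-1)) :=
    Eventually.of_forall fun s => by simp only [sA1']; ring
  exact h2.congr_of_eventuallyEq he

lemma sA2_deriv {τ : ℝ} (h : 0 < t + τ) (h2 : 0 < t + τ / 2) :
    HasDerivAt (sA2 σ c t) (sA2' σ c t τ) τ := by
  have := ((powD (y := -(2*σ)) h).sub (powD2 (y := -(2*σ)) h2)).const_mul (1/(2*σ*c))
  exact this

lemma sA2'_deriv {τ : ℝ} (h : 0 < t + τ) (h2 : 0 < t + τ / 2) :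
    HasDerivAt (sA2' σ c t) (sA2'' σ c t τ) τ := by
  have hh := ((powD (y := -(2*σ)-1) h).const_mul (1/(2*σ*c) * -(2*σ))).sub
    ((powD2 (y := -(2*σ)-1) h2).const_mul (1/(2*σ*c) * -(2*σ) * (1/2)))
  have he : sA2' σ c t =ᶠ[nhds τ]
      (fun s => 1/(2*σ*c) * -(2*σ) * (t + s)^(-(2*σ)-1)
        - 1/(2*σ*c) * -(2*σ) * (1/2) * (t + s/2)^(-(2*σ)-1)) :=
    Eventually.of_forall fun s => by simp only [sA2']; ring
  have := hh.congr_of_eventuallyEq he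
  exact this

lemma sB_deriv {τ : ℝ} (h : 0 < t + τ) :
    HasDerivAt (sB σ c t) (sB' σ c t τ) τ :=
  ((powD h).sub_const _).const_mul _

lemma sB'_deriv {τ : ℝ} (h : 0 < t + τ) :
    HasDerivAt (sB' σ c t) (sB'' σ c t τ) τ := by
  have h2 := (powD (y := 3*σ-1) h).const_mul (σ*c/3 * (3*σ))
  have he : sB' σ c t =ᶠ[nhds τ]
      (fun s => σ*c/3 * (3*σ) * (t + s)^(3*σ-1)) :=
    Eventually.of_forall fun s => by simp only [sB']; ring
  exact h2.congr_of_eventuallyEq he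

lemma sU_deriv (hc : c ≠ 0) {τ : ℝ} (h : 0 < t + τ) :
    HasDerivAt (sU σ c t) (sU' σ c t τ) τ := by
  have hne : c * (t+τ)^(2*σ+1) ≠ 0 :=
    mul_ne_zero hc (Real.rpow_pos_of_pos h _).ne'
  exact (((powD (y := 2*σ+1) h).const_mul c).inv hne).neg

lemma sA1_zero : sA1 σ c t 0 = 0 := by simp [sA1]
lemma sA2_zero : sA2 σ c t 0 = 0 := by norm_num [sA2]
lemma sB_zero : sB σ c t 0 = 0 := by simp [sB]

lemma rpow1 (ht : 0 < t) : t^(-(2*σ)-1) = (t^(2*σ+1))⁻¹ := by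
  rw [show (-(2*σ)-1 : ℝ) = -(2*σ+1) by ring, Real.rpow_neg ht.le]

lemma rpow2 (ht : 0 < t) :
    t^(-(2*σ)-1-1) = t^(2*σ+1-1) * (t^(2*σ+1))⁻¹ * (t^(2*σ+1))⁻¹ := by
  rw [show (-(2*σ)-1-1 : ℝ) = (2*σ+1-1) + -(2*σ+1) + -(2*σ+1) by ring,
    Real.rpow_add ht, Real.rpow_add ht, Real.rpow_neg ht.le]

lemma sS1 (ht : 0 < t) (hσ : σ ≠ 0) (hc : c ≠ 0) :
    sA1' σ c t 0 + sA2' σ c t 0 = sU σ c t 0 := by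
  have hX : t^(2*σ+1) ≠ 0 := (Real.rpow_pos_of_pos ht _).ne'
  simp only [sA1', sA2', sU]
  simp only [zero_div, add_zero]
  rw [rpow1 ht]
  field_simp
  ring

lemma sS2 (ht : 0 < t) (hσ : σ ≠ 0) (hc : c ≠ 0) :
    sA1'' σ c t 0 + sA2'' σ c t 0 = sU' σ c t 0 := by
  have hX : t^(2*σ+1) ≠ 0 := (Real.rpow_pos_of_pos ht _).ne'
  simp only [sA1'', sA2'', sU']
  simp only [zero_div, add_zero]
  rw [rpow2 ht]
  field_simp
  ring

lemma sS3 (ht : 0 < t) (hσ : σ ≠ 0) (hc : c ≠ 0) :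
    sU σ c t 0 * (σ^2*c*t^(3*σ-1)) = 2*(sA2' σ c t 0 * sB' σ c t 0) := by
  have hX : t^(2*σ+1) ≠ 0 := (Real.rpow_pos_of_pos ht _).ne'
  simp only [sA2', sB', sU]
  simp only [zero_div, add_zero]
  rw [rpow1 ht]
  field_simp
  ring

lemma sS4 : sB'' σ c t 0 = σ^2*c*((3*σ-1)*t^(3*σ-1-1)) := by
  simp only [sB'']
  simp only [zero_div, add_zero]
  ring

lemma sS5 (ht : 0 < t) (hσ : σ ≠ 0) (hc : c ≠ 0) :
    (σ^2*c*t^(3*σ-1)) * -(c*t^(2*σ+1))⁻¹ = 2*(sB' σ c t 0 * sA1' σ c t 0) := by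
  have hX : t^(2*σ+1) ≠ 0 := (Real.rpow_pos_of_pos ht _).ne'
  simp only [sA1', sB']
  simp only [zero_div, add_zero]
  rw [rpow1 ht]
  field_simp
end scalars

section diffs
variable {σ c t : ℝ}

lemma sA1''_diff {τ : ℝ} (h : 0 < t + τ/2) : DifferentiableAt ℝ (sA1'' σ c t) τ := by
  have d1 : DifferentiableAt ℝ (fun s : ℝ => (t+s/2)^(-(2*σ)-1-1)) τ :=
    (powD2 h).differentiableAt
  exact ((d1.const_mul (-(2*σ)-1)).mul_const (1/2)).const_mul _

lemma sA2''_diff {τ : ℝ} (h : 0 < t + τ) (h2 : 0 < t + τ/2) :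
    DifferentiableAt ℝ (sA2'' σ c t) τ := by
  have d1 : DifferentiableAt ℝ (fun s : ℝ => (t+s)^(-(2*σ)-1-1)) τ :=
    (powD h).differentiableAt
  have d2 : DifferentiableAt ℝ (fun s : ℝ => (t+s/2)^(-(2*σ)-1-1)) τ :=
    (powD2 h2).differentiableAt
  exact ((d1.const_mul (-(2*σ)-1)).const_mul _).sub
    (((d2.const_mul (-(2*σ)-1)).mul_const (1/2)).const_mul _)

lemma sB''_diff {τ : ℝ} (h : 0 < t + τ) : DifferentiableAt ℝ (sB'' σ c t) τ := by
  have d1 : DifferentiableAt ℝ (fun s : ℝ => (t+s)^(3*σ-1-1)) τ :=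
    (powD h).differentiableAt
  exact (d1.const_mul (3*σ-1)).const_mul _

lemma sU'_diff (hc : c ≠ 0) {τ : ℝ} (h : 0 < t + τ) :
    DifferentiableAt ℝ (sU' σ c t) τ := by
  have d1 : DifferentiableAt ℝ (fun s : ℝ => (t+s)^(2*σ+1-1)) τ :=
    (powD h).differentiableAt
  have d2 : DifferentiableAt ℝ (fun s : ℝ => (t+s)^(2*σ+1)) τ :=
    (powD h).differentiableAt
  have hne : (c * (t+τ)^(2*σ+1))^2 ≠ 0 :=
    pow_ne_zero _ (mul_ne_zero hc (Real.rpow_pos_of_pos h _).ne')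
  exact (((d1.const_mul (2*σ+1)).const_mul c).neg.div ((d2.const_mul c).pow 2) hne).neg
end diffs




/-- **Second-order (Strang) splitting integrator: local error `O(τ³)`.** Along a
`C³` solution of the reduced Hamiltonian system `q̇ᵃ = -pₐ/(c s^(2σ+1))`,
`ṗₐ = σ² c s^(3σ-1) (∂f/∂qᵃ)(q)`, the one-step Strang update `(q″, p″)` satisfies
`‖(q(t+τ), p(t+τ)) - (q″(τ), p″(τ))‖ = O(τ³)` as `τ → 0⁺`. -/
theorem si2_local_error_order_three
    (d : ℕ) (hd : 1 ≤ d) (σ c : ℝ) (hσ : 2 ≤ σ) (hc : c ≠ 0)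
    (f : (Fin d → ℝ) → ℝ) (hf : ContDiff ℝ 3 f)
    (α β t : ℝ) (ht : t ∈ Set.Ioo α β) (hI : Set.Ioo α β ⊆ Set.Ioi 0)
    (q p : ℝ → Fin d → ℝ)
    (hq3 : ContDiffOn ℝ 3 q (Set.Ioo α β))
    (hp3 : ContDiffOn ℝ 3 p (Set.Ioo α β))
    (hq : ∀ s ∈ Set.Ioo α β, ∀ a : Fin d,
      HasDerivAt (fun u => q u a) (-(p s a) / (c * s ^ (2 * σ + 1))) s)
    (hp : ∀ s ∈ Set.Ioo α β, ∀ a : Fin d,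
      HasDerivAt (fun u => p u a)
        (σ ^ 2 * c * s ^ (3 * σ - 1) *
          deriv (fun r : ℝ => f (Function.update (q s) a r)) (q s a)) s) :
    (fun τ : ℝ =>
        ((q (t + τ) - si2Q d σ c t f q p τ, p (t + τ) - si2P d σ c t f q p τ) :
          (Fin d → ℝ) × (Fin d → ℝ)))
      =O[nhdsWithin 0 (Set.Ioi 0)] fun τ : ℝ => τ ^ 3 := by
  have ht0 : 0 < t := hI ht
  have hσ0 : σ ≠ 0 := by intro h; rw [h] at hσ; norm_num at hσ
  -- gradient function
  have hfd : ∀ x : Fin d → ℝ, DifferentiableAt ℝ f x :=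
    fun x => (hf.differentiable (by norm_num)).differentiableAt
  set g : (Fin d → ℝ) → (Fin d → ℝ) := fun x a => fderiv ℝ f x (Pi.single a 1)
    with hgdef
  have gspec : ∀ (x : Fin d → ℝ) (a : Fin d),
      deriv (fun r : ℝ => f (Function.update x a r)) (x a) = g x a :=
    fun x a => deriv_update_eq (hfd x) a
  have hg2 : ContDiff ℝ 2 g := by
    rw [hgdef]
    exact contDiff_pi.mpr fun a =>
      (hf.fderiv_right (by norm_num)).clm_apply contDiff_const
  have hgdiff : Differentiable ℝ g := hg2.differentiable (by norm_num)
  have hDg : Differentiable ℝ (fun x => fderiv ℝ g x) :=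
    (hg2.fderiv_right (m := 1) (by norm_num)).differentiable (by norm_num)
  -- neighborhood
  obtain ⟨ε₀, hε₀, hball⟩ := Metric.isOpen_iff.mp isOpen_Ioo t ht
  set ε : ℝ := min ε₀ t with hεdef
  have hε : 0 < ε := lt_min hε₀ ht0
  have hmem : ∀ τ : ℝ, |τ| < ε → t + τ ∈ Set.Ioo α β := by
    intro τ hτ
    apply hball
    rw [Metric.mem_ball, Real.dist_eq, add_sub_cancel_left]
    exact hτ.trans_le (min_le_left _ _)
  have hpos : ∀ τ : ℝ, |τ| < ε → 0 < t + τ := fun τ hτ => hI (hmem τ hτ)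
  have hpos2 : ∀ τ : ℝ, |τ| < ε → 0 < t + τ / 2 := by
    intro τ hτ
    have h1 := abs_lt.mp (hτ.trans_le (min_le_right _ _))
    linarith [h1.1, h1.2]
  have hNε : ∀ᶠ τ in nhds (0:ℝ), |τ| < ε := by
    filter_upwards [Metric.ball_mem_nhds (0:ℝ) hε] with τ hτ
    rwa [Metric.mem_ball, Real.dist_eq, sub_zero] at hτ
  have h0ε : |(0:ℝ)| < ε := by simpa using hε
  have h0p : 0 < t + 0 := hpos 0 h0ε
  have h0p2 : 0 < t + 0 / 2 := hpos2 0 h0ε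
  -- vector fields
  set Qv : ℝ → (Fin d → ℝ) := fun s => (-(c * s ^ (2*σ+1))⁻¹) • p s with hQvdef
  set Pv : ℝ → (Fin d → ℝ) := fun s => (σ^2*c*s^(3*σ-1)) • g (q s) with hPvdef
  have hQv : ∀ s ∈ Set.Ioo α β, HasDerivAt q (Qv s) s := by
    intro s hs
    refine hasDerivAt_pi.mpr fun a => ?_
    have h := hq s hs a
    refine h.congr_deriv ?_
    simp only [hQvdef, Pi.smul_apply, smul_eq_mul]
    ring
  have hPv : ∀ s ∈ Set.Ioo α β, HasDerivAt p (Pv s) s := by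
    intro s hs
    refine hasDerivAt_pi.mpr fun a => ?_
    have h := hp s hs a
    rw [gspec (q s) a] at h
    exact h
  have hshift : ∀ τ : ℝ, HasDerivAt (fun s : ℝ => t + s) 1 τ :=
    fun τ => (hasDerivAt_id τ).const_add t
  have hqs : ∀ τ : ℝ, |τ| < ε → HasDerivAt (fun τ' => q (t + τ')) (Qv (t+τ)) τ := by
    intro τ hτ
    have := (hQv (t+τ) (hmem τ hτ)).scomp τ (hshift τ)
    rw [one_smul] at this
    exact this
  have hps : ∀ τ : ℝ, |τ| < ε → HasDerivAt (fun τ' => p (t + τ')) (Pv (t+τ)) τ := by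
    intro τ hτ
    have := (hPv (t+τ) (hmem τ hτ)).scomp τ (hshift τ)
    rw [one_smul] at this
    exact this
  have hgqs : ∀ τ : ℝ, |τ| < ε →
      HasDerivAt (fun τ' => g (q (t + τ'))) (fderiv ℝ g (q (t+τ)) (Qv (t+τ))) τ :=
    fun τ hτ => by
      have h := (hgdiff (q (t+τ))).hasFDerivAt.comp_hasDerivAt τ (hqs τ hτ)
      exact h
  -- the Φq chain
  set Φq : ℝ → (Fin d → ℝ) := fun τ =>
    q (t+τ) - q t - (sA1 σ c t τ + sA2 σ c t τ) • p t
      - (sA2 σ c t τ * sB σ c t τ) • g (q t) with hΦqdef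
  set Φq1 : ℝ → (Fin d → ℝ) := fun τ =>
    Qv (t+τ) - (sA1' σ c t τ + sA2' σ c t τ) • p t
      - (sA2' σ c t τ * sB σ c t τ + sA2 σ c t τ * sB' σ c t τ) • g (q t) with hΦq1def
  set Φq2 : ℝ → (Fin d → ℝ) := fun τ =>
    (sU σ c t τ • Pv (t+τ) + sU' σ c t τ • p (t+τ))
      - (sA1'' σ c t τ + sA2'' σ c t τ) • p t
      - ((sA2'' σ c t τ * sB σ c t τ + sA2' σ c t τ * sB' σ c t τ)
          + (sA2' σ c t τ * sB' σ c t τ + sA2 σ c t τ * sB'' σ c t τ)) • g (q t)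
    with hΦq2def
  have hDq : ∀ᶠ τ in nhds (0:ℝ), HasDerivAt Φq (Φq1 τ) τ := by
    filter_upwards [hNε] with τ hτ
    have h1 := hpos τ hτ
    have h2 := hpos2 τ hτ
    simp only [hΦqdef, hΦq1def]
    exact (((hqs τ hτ).sub_const (q t)).sub
        (((sA1_deriv h2).add (sA2_deriv h1 h2)).smul_const (p t))).sub
      (((sA2_deriv h1 h2).mul (sB_deriv h1)).smul_const (g (q t)))
  have hDq1 : ∀ᶠ τ in nhds (0:ℝ), HasDerivAt Φq1 (Φq2 τ) τ := by
    filter_upwards [hNε] with τ hτ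
    have h1 := hpos τ hτ
    have h2 := hpos2 τ hτ
    simp only [hΦq1def, hΦq2def, hQvdef]
    exact (((sU_deriv hc h1).smul (hps τ hτ)).sub
        (((sA1'_deriv h2).add (sA2'_deriv h1 h2)).smul_const (p t))).sub
      ((((sA2'_deriv h1 h2).mul (sB_deriv h1)).add
        ((sA2_deriv h1 h2).mul (sB'_deriv h1))).smul_const (g (q t)))
  have dq0 : DifferentiableAt ℝ (fun τ' => q (t + τ')) 0 := (hqs 0 h0ε).differentiableAt
  have dp0 : DifferentiableAt ℝ (fun τ' => p (t + τ')) 0 := (hps 0 h0ε).differentiableAt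
  have dgq0 : DifferentiableAt ℝ (fun τ' => g (q (t + τ'))) 0 :=
    (hgqs 0 h0ε).differentiableAt
  have dpow : ∀ e : ℝ, DifferentiableAt ℝ (fun τ' : ℝ => (t+τ')^e) 0 :=
    fun e => (powD h0p).differentiableAt
  have dPvs : DifferentiableAt ℝ (fun τ' => Pv (t + τ')) 0 := by
    simp only [hPvdef]
    exact ((dpow (3*σ-1)).const_mul (σ^2*c)).smul dgq0
  have dQvs : DifferentiableAt ℝ (fun τ' => Qv (t + τ')) 0 := by
    simp only [hQvdef]
    have hne : c * (t+(0:ℝ))^(2*σ+1) ≠ 0 :=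
      mul_ne_zero hc (Real.rpow_pos_of_pos h0p _).ne'
    exact (((dpow (2*σ+1)).const_mul c).inv hne).neg.smul dp0
  have dΦq2 : DifferentiableAt ℝ Φq2 0 := by
    simp only [hΦq2def]
    have dU : DifferentiableAt ℝ (sU σ c t) 0 := (sU_deriv hc h0p).differentiableAt
    have dA1 : DifferentiableAt ℝ (sA1 σ c t) 0 := (sA1_deriv h0p2).differentiableAt
    have dA2 : DifferentiableAt ℝ (sA2 σ c t) 0 := (sA2_deriv h0p h0p2).differentiableAt
    have dA1' : DifferentiableAt ℝ (sA1' σ c t) 0 := (sA1'_deriv h0p2).differentiableAt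
    have dA2' : DifferentiableAt ℝ (sA2' σ c t) 0 := (sA2'_deriv h0p h0p2).differentiableAt
    have dB : DifferentiableAt ℝ (sB σ c t) 0 := (sB_deriv h0p).differentiableAt
    have dB' : DifferentiableAt ℝ (sB' σ c t) 0 := (sB'_deriv h0p).differentiableAt
    exact (((dU.smul dPvs).add ((sU'_diff hc h0p).smul dp0)).sub
        (((sA1''_diff h0p2).add (sA2''_diff h0p h0p2)).smul_const (p t))).sub
      (((((sA2''_diff h0p h0p2).mul dB).add (dA2'.mul dB')).add
        ((dA2'.mul dB').add (dA2.mul (sB''_diff h0p)))).smul_const (g (q t)))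
  have hΦq0 : Φq 0 = 0 := by
    funext a
    simp only [hΦqdef, Pi.sub_apply, Pi.smul_apply, smul_eq_mul, Pi.zero_apply,
      add_zero, sA1_zero, sA2_zero, sB_zero]
    ring
  have hΦq10 : Φq1 0 = 0 := by
    funext a
    have h1 := sS1 (σ := σ) (c := c) (t := t) ht0 hσ0 hc
    simp only [sU, add_zero] at h1
    simp only [hΦq1def, hQvdef, Pi.sub_apply, Pi.smul_apply, smul_eq_mul,
      Pi.zero_apply, add_zero, sA2_zero, sB_zero]
    linear_combination -(p t a) * h1
  have hΦq20 : Φq2 0 = 0 := by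
    funext a
    have h2 := sS2 (σ := σ) (c := c) (t := t) ht0 hσ0 hc
    simp only [sU', add_zero] at h2
    have h3 := sS3 (σ := σ) (c := c) (t := t) ht0 hσ0 hc
    simp only [sU, add_zero] at h3
    simp only [hΦq2def, hPvdef, sU, sU', Pi.add_apply, Pi.sub_apply, Pi.smul_apply,
      smul_eq_mul, Pi.zero_apply, add_zero, sA2_zero, sB_zero]
    linear_combination -(p t a) * h2 + (g (q t) a) * h3
  have OΦq : Φq =O[nhdsWithin 0 (Set.Ioi 0)] fun τ : ℝ => τ ^ 3 :=
    isBigO_cube hDq hDq1 dΦq2 hΦq0 hΦq10 hΦq20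
  -- the Φp chain
  set Φp : ℝ → (Fin d → ℝ) := fun τ =>
    p (t+τ) - p t - sB σ c t τ • g (q t)
      - (sB σ c t τ * sA1 σ c t τ) • fderiv ℝ g (q t) (p t) with hΦpdef
  set Φp1 : ℝ → (Fin d → ℝ) := fun τ =>
    Pv (t+τ) - sB' σ c t τ • g (q t)
      - (sB' σ c t τ * sA1 σ c t τ + sB σ c t τ * sA1' σ c t τ) •
          fderiv ℝ g (q t) (p t) with hΦp1def
  set Φp2 : ℝ → (Fin d → ℝ) := fun τ =>
    ((σ^2*c*(t+τ)^(3*σ-1)) • fderiv ℝ g (q (t+τ)) (Qv (t+τ))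
        + (σ^2*c*((3*σ-1)*(t+τ)^(3*σ-1-1))) • g (q (t+τ)))
      - sB'' σ c t τ • g (q t)
      - ((sB'' σ c t τ * sA1 σ c t τ + sB' σ c t τ * sA1' σ c t τ)
          + (sB' σ c t τ * sA1' σ c t τ + sB σ c t τ * sA1'' σ c t τ)) •
          fderiv ℝ g (q t) (p t) with hΦp2def
  have hDp : ∀ᶠ τ in nhds (0:ℝ), HasDerivAt Φp (Φp1 τ) τ := by
    filter_upwards [hNε] with τ hτ
    have h1 := hpos τ hτ
    have h2 := hpos2 τ hτ
    simp only [hΦpdef, hΦp1def]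
    exact (((hps τ hτ).sub_const (p t)).sub
        ((sB_deriv h1).smul_const (g (q t)))).sub
      (((sB_deriv h1).mul (sA1_deriv h2)).smul_const (fderiv ℝ g (q t) (p t)))
  have hDp1 : ∀ᶠ τ in nhds (0:ℝ), HasDerivAt Φp1 (Φp2 τ) τ := by
    filter_upwards [hNε] with τ hτ
    have h1 := hpos τ hτ
    have h2 := hpos2 τ hτ
    simp only [hΦp1def, hΦp2def, hPvdef]
    exact ((((powD (y := 3*σ-1) h1).const_mul (σ^2*c)).smul (hgqs τ hτ)).sub
        ((sB'_deriv h1).smul_const (g (q t)))).sub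
      ((((sB'_deriv h1).mul (sA1_deriv h2)).add
        ((sB_deriv h1).mul (sA1'_deriv h2))).smul_const (fderiv ℝ g (q t) (p t)))
  have dΦp2 : DifferentiableAt ℝ Φp2 0 := by
    simp only [hΦp2def]
    have dA1 : DifferentiableAt ℝ (sA1 σ c t) 0 := (sA1_deriv h0p2).differentiableAt
    have dA1' : DifferentiableAt ℝ (sA1' σ c t) 0 := (sA1'_deriv h0p2).differentiableAt
    have dB : DifferentiableAt ℝ (sB σ c t) 0 := (sB_deriv h0p).differentiableAt
    have dB' : DifferentiableAt ℝ (sB' σ c t) 0 := (sB'_deriv h0p).differentiableAt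
    have dfd : DifferentiableAt ℝ (fun τ' => fderiv ℝ g (q (t+τ')) (Qv (t+τ'))) 0 :=
      (((hDg (q (t+0))).comp 0 dq0).clm_apply dQvs)
    exact (((((dpow (3*σ-1)).const_mul (σ^2*c)).smul dfd).add
        ((((dpow (3*σ-1-1)).const_mul (3*σ-1)).const_mul (σ^2*c)).smul dgq0)).sub
        ((sB''_diff h0p).smul_const (g (q t)))).sub
      (((((sB''_diff h0p).mul dA1).add (dB'.mul dA1')).add
        ((dB'.mul dA1').add (dB.mul (sA1''_diff h0p2)))).smul_const
          (fderiv ℝ g (q t) (p t)))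
  have hΦp0 : Φp 0 = 0 := by
    funext a
    simp only [hΦpdef, Pi.sub_apply, Pi.smul_apply, smul_eq_mul, Pi.zero_apply,
      add_zero, sA1_zero, sB_zero]
    ring
  have hΦp10 : Φp1 0 = 0 := by
    funext a
    simp only [hΦp1def, hPvdef, sB', Pi.sub_apply, Pi.add_apply, Pi.smul_apply,
      smul_eq_mul, Pi.zero_apply, add_zero, sA1_zero, sB_zero]
    ring
  have hΦp20 : Φp2 0 = 0 := by
    funext a
    have h4 := sS4 (σ := σ) (c := c) (t := t)
    have h5 := sS5 (σ := σ) (c := c) (t := t) ht0 hσ0 hc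
    simp only [sB', add_zero] at h5
    simp only [hΦp2def, hQvdef, sB', ContinuousLinearMap.map_smul, add_zero,
      sA1_zero, sB_zero, Pi.sub_apply, Pi.add_apply, Pi.smul_apply, smul_eq_mul,
      Pi.zero_apply]
    linear_combination (fderiv ℝ g (q t) (p t) a) * h5 - (g (q t) a) * h4
  have OΦp : Φp =O[nhdsWithin 0 (Set.Ioi 0)] fun τ : ℝ => τ ^ 3 :=
    isBigO_cube hDp hDp1 dΦp2 hΦp0 hΦp10 hΦp20
  -- the ψ and remainder pieces
  set q1v : ℝ → (Fin d → ℝ) := fun τ => q t + sA1 σ c t τ • p t with hq1vdef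
  have hq1v0 : q1v 0 = q t := by
    funext a; simp [hq1vdef, sA1_zero]
  have hq1vD : ∀ τ : ℝ, |τ| < ε → HasDerivAt q1v (sA1' σ c t τ • p t) τ := by
    intro τ hτ
    simp only [hq1vdef]
    exact ((sA1_deriv (hpos2 τ hτ)).smul_const (p t)).const_add (q t)
  have dq1v : DifferentiableAt ℝ q1v 0 := (hq1vD 0 h0ε).differentiableAt
  set ψ : ℝ → (Fin d → ℝ) := fun τ =>
    g (q1v τ) - g (q t) - sA1 σ c t τ • fderiv ℝ g (q t) (p t) with hψdef
  set ψ1 : ℝ → (Fin d → ℝ) := fun τ =>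
    fderiv ℝ g (q1v τ) (sA1' σ c t τ • p t)
      - sA1' σ c t τ • fderiv ℝ g (q t) (p t) with hψ1def
  have hDψ : ∀ᶠ τ in nhds (0:ℝ), HasDerivAt ψ (ψ1 τ) τ := by
    filter_upwards [hNε] with τ hτ
    have h2 := hpos2 τ hτ
    simp only [hψdef, hψ1def]
    exact (((hgdiff (q1v τ)).hasFDerivAt.comp_hasDerivAt τ (hq1vD τ hτ)).sub_const
        (g (q t))).sub ((sA1_deriv h2).smul_const (fderiv ℝ g (q t) (p t)))
  have dψ1 : DifferentiableAt ℝ ψ1 0 := by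
    simp only [hψ1def]
    exact (((hDg (q1v 0)).comp 0 dq1v).clm_apply
        ((sA1'_deriv h0p2).differentiableAt.smul (differentiableAt_const (p t)))).sub
      ((sA1'_deriv h0p2).differentiableAt.smul (differentiableAt_const _))
  have hψ0 : ψ 0 = 0 := by
    simp [hψdef, hq1v0, sA1_zero]
  have hψ10 : ψ1 0 = 0 := by
    simp only [hψ1def, hq1v0, ContinuousLinearMap.map_smul]
    simp
  have Oψ : ψ =O[nhdsWithin 0 (Set.Ioi 0)] fun τ : ℝ => τ ^ 2 :=
    isBigO_sq hDψ dψ1 hψ0 hψ10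
  have Orr : (fun τ => g (q1v τ) - g (q t)) =O[nhds 0] fun τ : ℝ => τ :=
    isBigO_id_of_zero (((hgdiff (q1v 0)).comp 0 dq1v).sub_const _)
      (by simp [hq1v0])
  have Oa2 : (sA2 σ c t) =O[nhds 0] fun τ : ℝ => τ :=
    isBigO_id_of_zero (sA2_deriv h0p h0p2).differentiableAt sA2_zero
  have Ob : (sB σ c t) =O[nhds 0] fun τ : ℝ => τ :=
    isBigO_id_of_zero (sB_deriv h0p).differentiableAt sB_zero
  -- rewriting the integrator step
  have hsi2Q1eq : ∀ τ, si2Q1 d σ c t q p τ = q1v τ := by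
    intro τ; funext a
    simp only [si2Q1, hq1vdef, sA1, Pi.add_apply, Pi.smul_apply, smul_eq_mul]
    all_goals ring
  have hsi2Peq : ∀ τ, si2P d σ c t f q p τ = p t + sB σ c t τ • g (q1v τ) := by
    intro τ; funext a
    simp only [si2P, hsi2Q1eq τ]
    rw [gspec (q1v τ) a]
    simp only [sB, Pi.add_apply, Pi.smul_apply, smul_eq_mul]
    all_goals ring
  have hsi2Qeq : ∀ τ, si2Q d σ c t f q p τ
      = q1v τ + sA2 σ c t τ • (p t + sB σ c t τ • g (q1v τ)) := by
    intro τ; funext a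
    simp only [si2Q, hsi2Q1eq τ, hsi2Peq τ, sA2, Pi.add_apply, Pi.smul_apply,
      smul_eq_mul]
    all_goals ring
  have hEq : (fun τ => q (t + τ) - si2Q d σ c t f q p τ)
      = fun τ => Φq τ - (sA2 σ c t τ * sB σ c t τ) • (g (q1v τ) - g (q t)) := by
    funext τ a
    rw [hsi2Qeq τ]
    simp only [hΦqdef, hq1vdef, Pi.sub_apply, Pi.add_apply, Pi.smul_apply,
      smul_eq_mul]
    ring
  have hEp : (fun τ => p (t + τ) - si2P d σ c t f q p τ)
      = fun τ => Φp τ - sB σ c t τ • ψ τ := by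
    funext τ a
    rw [hsi2Peq τ]
    simp only [hΦpdef, hψdef, hq1vdef, Pi.sub_apply, Pi.add_apply, Pi.smul_apply,
      smul_eq_mul]
    ring
  have O1 : (fun τ => (sA2 σ c t τ * sB σ c t τ) • (g (q1v τ) - g (q t)))
      =O[nhdsWithin 0 (Set.Ioi 0)] fun τ : ℝ => τ ^ 3 := by
    have h := ((Oa2.mono (nhdsWithin_le_nhds : nhdsWithin (0:ℝ) (Set.Ioi 0) ≤ nhds 0)).mul (Ob.mono (nhdsWithin_le_nhds : nhdsWithin (0:ℝ) (Set.Ioi 0) ≤ nhds 0))).smul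
      (Orr.mono (nhdsWithin_le_nhds : nhdsWithin (0:ℝ) (Set.Ioi 0) ≤ nhds 0))
    refine h.congr' EventuallyEq.rfl (Filter.Eventually.of_forall fun τ => ?_)
    simp only [smul_eq_mul]
    ring
  have O2 : (fun τ => sB σ c t τ • ψ τ)
      =O[nhdsWithin 0 (Set.Ioi 0)] fun τ : ℝ => τ ^ 3 := by
    have h := (Ob.mono (nhdsWithin_le_nhds : nhdsWithin (0:ℝ) (Set.Ioi 0) ≤ nhds 0)).smul Oψ
    refine h.congr' EventuallyEq.rfl (Filter.Eventually.of_forall fun τ => ?_)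
    simp only [smul_eq_mul]
    ring
  have G1 : (fun τ => q (t + τ) - si2Q d σ c t f q p τ)
      =O[nhdsWithin 0 (Set.Ioi 0)] fun τ : ℝ => τ ^ 3 := by
    rw [hEq]; exact OΦq.sub O1
  have G2 : (fun τ => p (t + τ) - si2P d σ c t f q p τ)
      =O[nhdsWithin 0 (Set.Ioi 0)] fun τ : ℝ => τ ^ 3 := by
    rw [hEp]; exact OΦp.sub O2
  exact G1.prod_left G2
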